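/- Let F be an Orlicz function satisfying the Δ₂-condition with constant Δ, and write F_t(x) = F(tx)/F(t). Suppose there exist constants C₀, C₁ > 1 and r > 0 such that Φ₊^∞(x, C₀) ≤ C₁ x^{−r} for all 0 < x ≤ 1, where Φ₊^∞(x,C) is the supremum of all n for which there exist 1 ≤ a₁ < b₁ ≤ a₂ < b₂ ≤ ⋯ ≤ a_n < b_n with F_{b_k}(x) ≥ C F_{a_k}(x) for all k. Then there exist constants C₂ > 1 and r' > 0 such that Φ₋^∞(x, C₂) ≤ C₂ x^{−r'} for all 0 < x ≤ 1, where Φ₋^∞(x,C) is the analogous supremum with the condition F_{a_k}(x) ≥ C F_{b_k}(x). -/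

import Mathlib

open Set

/-- `F_t(x) = F(tx)/F(t)`. -/
noncomputable def Ft (F : ℝ → ℝ) (t x : ℝ) : ℝ := F (t * x) / F t

/-- A chain `1 ≤ a₁ < b₁ ≤ a₂ < b₂ ≤ ⋯ ≤ a_n < b_n`. -/
def OrlChain (a b : ℕ → ℝ) (n : ℕ) : Prop :=
  (∀ k < n, 1 ≤ a k ∧ a k < b k) ∧ ∀ k, k + 1 < n → b k ≤ a (k + 1)

lemma orl_a_mono {a b : ℕ → ℝ} {n : ℕ} (h : OrlChain a b n) :
    ∀ k' < n, ∀ k ≤ k', a k ≤ a k' := by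
  intro k' hk'
  induction k' with
  | zero => intro k hk; simp [Nat.le_zero.mp hk]
  | succ j ih =>
    intro k hk
    rcases Nat.lt_succ_iff_lt_or_eq.mp (Nat.lt_succ_of_le hk) with h1 | h2
    · have hj : j < n := Nat.lt_of_succ_lt hk'
      calc a k ≤ a j := ih hj k (Nat.lt_succ_iff.mp h1)
        _ ≤ b j := (h.1 j hj).2.le
        _ ≤ a (j+1) := h.2 j hk'
    · simp [h2]

lemma orlchain_sub {a b : ℕ → ℝ} {N : ℕ} (hch : OrlChain a b (N+1))
    (P : ℕ → Prop) [DecidablePred P]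
    (hP : ∀ k < N, P k → b k ≠ a (k+1)) :
    ∃ a' b' : ℕ → ℝ,
      OrlChain a' b' (((Finset.range N).filter P).card) ∧
      ∀ j < ((Finset.range N).filter P).card,
        ∃ k < N, P k ∧ a' j = b k ∧ b' j = a (k+1) := by
  classical
  set U := (Finset.range N).filter P with hU
  set l := U.sort (· ≤ ·) with hl
  have hlen : l.length = U.card := Finset.length_sort _
  have hsort : l.Pairwise (· < ·) := (Finset.sortedLT_sort U).pairwise
  have hmemk : ∀ (j : ℕ) (hj : j < l.length), l.get ⟨j, hj⟩ < N ∧ P (l.get ⟨j, hj⟩) := by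
    intro j hj
    have hmem : l.get ⟨j, hj⟩ ∈ U := Finset.mem_sort (· ≤ ·) |>.mp (List.get_mem l ⟨j, hj⟩)
    rwa [hU, Finset.mem_filter, Finset.mem_range] at hmem
  refine ⟨fun j => b (l.getD j 0), fun j => a (l.getD j 0 + 1), ⟨?_, ?_⟩, ?_⟩
  · intro j hj
    have hj' : j < l.length := by rw [hlen]; exact hj
    have hget : l.getD j 0 = l.get ⟨j, hj'⟩ := List.getD_eq_getElem l 0 hj'
    obtain ⟨hkN, hPk⟩ := hmemk j hj'
    set k := l.get ⟨j, hj'⟩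
    have hk1 : k < N + 1 := Nat.lt_succ_of_lt hkN
    have h1 := hch.1 k hk1
    refine ⟨?_, ?_⟩
    · show 1 ≤ b (l.getD j 0)
      rw [hget]; linarith [h1.1, h1.2]
    · show b (l.getD j 0) < a (l.getD j 0 + 1)
      rw [hget]
      exact lt_of_le_of_ne (hch.2 k (by omega)) (hP k hkN hPk)
  · intro j hj
    have hj1 : j + 1 < l.length := by rw [hlen]; exact hj
    have hj0 : j < l.length := Nat.lt_of_succ_lt hj1
    have hg0 : l.getD j 0 = l.get ⟨j, hj0⟩ := List.getD_eq_getElem l 0 hj0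
    have hg1 : l.getD (j+1) 0 = l.get ⟨j+1, hj1⟩ := List.getD_eq_getElem l 0 hj1
    set k := l.get ⟨j, hj0⟩
    set k' := l.get ⟨j+1, hj1⟩
    have hkk : k < k' := hsort.rel_get_of_lt (by simp [Fin.lt_def])
    have hk'N : k' < N := (hmemk _ hj1).1
    have hk'n : k' < N + 1 := Nat.lt_succ_of_lt hk'N
    show a (l.getD j 0 + 1) ≤ b (l.getD (j+1) 0)
    rw [hg0, hg1]
    calc a (k+1) ≤ a k' := orl_a_mono hch k' hk'n (k+1) hkk
      _ ≤ b k' := (hch.1 k' hk'n).2.le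
  · intro j hj
    have hj' : j < l.length := by rw [hlen]; exact hj
    have hget : l.getD j 0 = l.get ⟨j, hj'⟩ := List.getD_eq_getElem l 0 hj'
    obtain ⟨hkN, hPk⟩ := hmemk j hj'
    exact ⟨l.get ⟨j, hj'⟩, hkN, hPk, by simp only []; rw [hget], by simp only []; rw [hget]⟩

set_option maxHeartbeats 2000000 in
/-- For an Orlicz function with the Δ₂-condition, a polynomial bound on the number
of upward jumps `F_{b_k}(x) ≥ C₀ F_{a_k}(x)` implies a polynomial bound on the number
of downward jumps `F_{a_k}(x) ≥ C₂ F_{b_k}(x)`. -/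
theorem downward_count_of_upward_count
    (F : ℝ → ℝ) (hF0 : F 0 = 0)
    (hmono : StrictMonoOn F (Ici 0)) (hcont : ContinuousOn F (Ici 0))
    (hconv : ConvexOn ℝ (Ici 0) F)
    (Δ : ℝ) (hΔ : ∀ x ≥ (0 : ℝ), F (2 * x) ≤ Δ * F x)
    (C₀ C₁ r : ℝ) (hC₀ : 1 < C₀) (hC₁ : 1 < C₁) (hr : 0 < r)
    (hplus : ∀ x ∈ Ioc (0 : ℝ) 1, ∀ (n : ℕ) (a b : ℕ → ℝ), OrlChain a b n →
      (∀ k < n, C₀ * Ft F (a k) x ≤ Ft F (b k) x) → (n : ℝ) ≤ C₁ * x ^ (-r)) :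
    ∃ C₂ > (1 : ℝ), ∃ r' > (0 : ℝ), ∀ x ∈ Ioc (0 : ℝ) 1,
      ∀ (n : ℕ) (a b : ℕ → ℝ), OrlChain a b n →
      (∀ k < n, C₂ * Ft F (b k) x ≤ Ft F (a k) x) → (n : ℝ) ≤ C₂ * x ^ (-r') := by
  classical
  -- basic consequences of the hypotheses
  have hFpos : ∀ y : ℝ, 0 < y → 0 < F y := by
    intro y hy
    have h := hmono (le_refl (0:ℝ)) (mem_Ici.mpr hy.le) hy
    rwa [hF0] at h
  have hFmono : ∀ y z : ℝ, 0 ≤ y → y ≤ z → F y ≤ F z := fun y z hy hz =>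
    hmono.monotoneOn (mem_Ici.mpr hy) (mem_Ici.mpr (hy.trans hz)) hz
  have hΔ1 : 1 < Δ := by
    have h2 : F 2 ≤ Δ * F 1 := by have := hΔ 1 (by norm_num); simpa using this
    have h12 : F 1 < F 2 := hmono (by norm_num) (by norm_num) (by norm_num)
    have h1p : 0 < F 1 := hFpos 1 one_pos
    nlinarith
  have hΔiter : ∀ (k : ℕ) (y : ℝ), 0 ≤ y → F (2^k * y) ≤ Δ^k * F y := by
    intro k
    induction k with
    | zero => intro y hy; simp
    | succ k ih =>
      intro y hy
      have h1 : (2:ℝ)^(k+1) * y = 2 * (2^k * y) := by ring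
      have h2 : (0:ℝ) ≤ 2^k * y := by positivity
      calc F ((2:ℝ)^(k+1) * y) = F (2 * (2^k * y)) := by rw [h1]
        _ ≤ Δ * F (2^k * y) := hΔ _ h2
        _ ≤ Δ * (Δ^k * F y) := by nlinarith [ih y hy]
        _ = Δ^(k+1) * F y := by ring
  have hlC₀ : 0 < Real.log C₀ := Real.log_pos hC₀
  have hlΔ : 0 < Real.log Δ := Real.log_pos hΔ1
  set B : ℝ := 6 * C₁ * Real.log Δ / Real.log C₀ with hBdef
  have hBpos : 0 < B := by positivity
  have hC₂ : (C₀:ℝ)^2 ≤ C₀^2 + B := by linarith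
  refine ⟨C₀^2 + B, by nlinarith, r + 1, by linarith, ?_⟩
  intro x hx n a b hch hjump
  obtain ⟨hx0, hx1⟩ := hx
  have hxrpos : (0:ℝ) < x ^ (-(r+1)) := Real.rpow_pos_of_pos hx0 _
  rcases Nat.eq_zero_or_pos n with rfl | hn
  · simpa using by positivity
  obtain ⟨N, rfl⟩ : ∃ N, n = N + 1 := ⟨n-1, by omega⟩
  -- constants depending on x
  set m := ⌈Real.logb 2 x⁻¹⌉₊ with hmdef
  set L : ℝ := Δ ^ m with hLdef
  have hΔ0 : (0:ℝ) < Δ := lt_trans one_pos hΔ1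
  have hL1 : 1 ≤ L := one_le_pow₀ hΔ1.le
  have hLpos : 0 < L := lt_of_lt_of_le one_pos hL1
  have hxinv : 1 ≤ x⁻¹ := one_le_inv_iff₀.mpr ⟨hx0, hx1⟩
  have h2m : x⁻¹ ≤ 2 ^ m := by
    calc x⁻¹ = (2:ℝ) ^ (Real.logb 2 x⁻¹) :=
          (Real.rpow_logb (by norm_num) (by norm_num) (by positivity)).symm
      _ ≤ (2:ℝ) ^ (m:ℝ) :=
          Real.rpow_le_rpow_of_exponent_le (by norm_num) (Nat.le_ceil _)
      _ = 2 ^ m := Real.rpow_natCast 2 m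
  -- the fundamental two-sided bound on `Ft`
  have key : ∀ t : ℝ, 1 ≤ t → 0 < Ft F t x ∧ Ft F t x ≤ 1 ∧ 1 ≤ L * Ft F t x := by
    intro t ht
    have ht0 : 0 < t := lt_of_lt_of_le one_pos ht
    have htx : 0 < t * x := mul_pos ht0 hx0
    have hFt : 0 < F t := hFpos t ht0
    have hFtx : 0 < F (t*x) := hFpos _ htx
    have hle : F (t*x) ≤ F t := hFmono _ _ htx.le (by nlinarith)
    have hge : F t ≤ L * F (t*x) := by
      have hx2 : 1 ≤ 2^m * x := by
        have := mul_le_mul_of_nonneg_right h2m hx0.le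
        rwa [inv_mul_cancel₀ hx0.ne'] at this
      have h1 : t ≤ 2^m * (t*x) := by nlinarith
      calc F t ≤ F (2^m * (t*x)) := hFmono _ _ ht0.le h1
        _ ≤ Δ^m * F (t*x) := hΔiter m _ htx.le
    refine ⟨div_pos hFtx hFt, div_le_one_of_le₀ hle hFt.le, ?_⟩
    rw [Ft, mul_div_assoc', le_div_iff₀ hFt]
    linarith
  have hC₀0 : (0:ℝ) < C₀ := lt_trans one_pos hC₀
  -- bounds at chain points
  have hA : ∀ k < N+1, 0 < Ft F (a k) x ∧ Ft F (a k) x ≤ 1 ∧ 1 ≤ L * Ft F (a k) x :=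
    fun k hk => key _ (hch.1 k hk).1
  have hB : ∀ k < N+1, 0 < Ft F (b k) x ∧ Ft F (b k) x ≤ 1 ∧ 1 ≤ L * Ft F (b k) x :=
    fun k hk => key _ (le_trans (hch.1 k hk).1 (hch.1 k hk).2.le)
  set P : ℕ → Prop := fun k => C₀ * Ft F (b k) x ≤ Ft F (a (k+1)) x with hPdef
  set c : ℕ → ℕ := fun j => ((Finset.range j).filter P).card with hcdef
  -- descent along the chain
  have descent : ∀ j, j ≤ N → Ft F (b j) x * C₀^(j+1) ≤ L^(c j) := by
    intro j
    induction j with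
    | zero =>
      intro _
      have h0 : (C₀^2 + B) * Ft F (b 0) x ≤ Ft F (a 0) x := hjump 0 (by omega)
      have h1 := hA 0 (by omega)
      have h2 := (hB 0 (by omega)).1
      have hc0 : c 0 = 0 := by simp [hcdef]
      rw [hc0, pow_zero, pow_one]
      nlinarith
    | succ j ih =>
      intro hjN
      have hIH := ih (by omega)
      have hj1 : j + 1 < N + 1 := by omega
      have hBj := hB j (by omega)
      have hBj1 := hB (j+1) hj1
      have hAj1 := hA (j+1) hj1
      have hjmp : C₀^2 * Ft F (b (j+1)) x ≤ Ft F (a (j+1)) x :=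
        le_trans (mul_le_mul_of_nonneg_right hC₂ hBj1.1.le) (hjump (j+1) hj1)
      have hcsucc : (Finset.range (j+1)).filter P
          = if P j then insert j ((Finset.range j).filter P) else (Finset.range j).filter P := by
        rw [Finset.range_add_one, Finset.filter_insert]
      by_cases hPj : P j
      · have hcval : c (j+1) = c j + 1 := by
          simp only [hcdef, hcsucc, if_pos hPj]
          rw [Finset.card_insert_of_notMem (by simp)]
        have hup : Ft F (a (j+1)) x ≤ L * Ft F (b j) x := le_trans hAj1.2.1 hBj.2.2
        have e1 : Ft F (b (j+1)) x * C₀^2 ≤ L * Ft F (b j) x := by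
          calc Ft F (b (j+1)) x * C₀^2 = C₀^2 * Ft F (b (j+1)) x := by ring
            _ ≤ Ft F (a (j+1)) x := hjmp
            _ ≤ L * Ft F (b j) x := hup
        rw [hcval]
        calc Ft F (b (j+1)) x * C₀^(j+1+1) = (Ft F (b (j+1)) x * C₀^2) * C₀^j := by ring
          _ ≤ (L * Ft F (b j) x) * C₀^j := by
              apply mul_le_mul_of_nonneg_right e1 (by positivity)
          _ ≤ (L * Ft F (b j) x) * C₀^(j+1) := by
              exact mul_le_mul_of_nonneg_left (pow_le_pow_right₀ hC₀.le (by omega))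
                (mul_nonneg hLpos.le hBj.1.le)
          _ = L * (Ft F (b j) x * C₀^(j+1)) := by ring
          _ ≤ L * L^(c j) := mul_le_mul_of_nonneg_left hIH hLpos.le
          _ = L^(c j + 1) := by rw [pow_succ]; ring
      · have hcval : c (j+1) = c j := by simp only [hcdef, hcsucc, if_neg hPj]
        have hdn : Ft F (a (j+1)) x ≤ C₀ * Ft F (b j) x := (not_le.mp hPj).le
        have e1 : C₀ * Ft F (b (j+1)) x ≤ Ft F (b j) x := by nlinarith [hBj1.1, hBj.1]
        rw [hcval]
        calc Ft F (b (j+1)) x * C₀^(j+1+1) = (C₀ * Ft F (b (j+1)) x) * C₀^(j+1) := by ring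
          _ ≤ Ft F (b j) x * C₀^(j+1) := mul_le_mul_of_nonneg_right e1 (by positivity)
          _ ≤ L^(c j) := hIH
  set u : ℕ := c N with hudef
  -- main exponential inequality
  have hfinal : C₀^(N+1) ≤ (Δ^m)^(u+1) := by
    have h1 := descent N (le_refl N)
    have h2 := (hB N (by omega)).2.2
    have h3 : C₀^(N+1) ≤ (L * Ft F (b N) x) * C₀^(N+1) := by
      nlinarith [pow_pos hC₀0 (N+1)]
    calc C₀^(N+1) ≤ (L * Ft F (b N) x) * C₀^(N+1) := h3
      _ = L * (Ft F (b N) x * C₀^(N+1)) := by ring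
      _ ≤ L * L^(c N) := mul_le_mul_of_nonneg_left h1 hLpos.le
      _ = L^(u + 1) := by rw [pow_succ]; ring
  -- count of upward jumps via `hplus`
  have hu : (u:ℝ) ≤ C₁ * x ^ (-r) := by
    have hPne : ∀ k < N, P k → b k ≠ a (k+1) := by
      intro k hk hPk heq
      have h1 := (hB k (by omega)).1
      have h2 : C₀ * Ft F (b k) x ≤ Ft F (a (k+1)) x := hPk
      rw [← heq] at h2
      nlinarith
    obtain ⟨a', b', hch', hspec⟩ := orlchain_sub hch P hPne
    exact hplus x ⟨hx0, hx1⟩ u a' b' hch' (by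
      intro j hj
      obtain ⟨k, hkN, hPk, ha', hb'⟩ := hspec j hj
      rw [ha', hb']
      exact hPk)
  -- final arithmetic
  have hxr1 : 1 ≤ x ^ (-r) :=
    Real.one_le_rpow_of_pos_of_le_one_of_nonpos hx0 hx1 (by linarith)
  have hlog : ((N:ℝ)+1) * Real.log C₀ ≤ ((m:ℝ) * ((u:ℝ)+1)) * Real.log Δ := by
    have h1 : Real.log (C₀^(N+1)) ≤ Real.log ((Δ^m)^(u+1)) :=
      Real.log_le_log (pow_pos (by linarith) _) hfinal
    rw [← pow_mul] at h1
    rw [Real.log_pow, Real.log_pow] at h1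
    push_cast at h1 ⊢
    nlinarith
  have hm3 : (m:ℝ) ≤ 3 * x⁻¹ := by
    have h1 : (m:ℝ) < Real.logb 2 x⁻¹ + 1 := by
      rw [hmdef]
      exact Nat.ceil_lt_add_one (Real.logb_nonneg (by norm_num) hxinv)
    have h2 : Real.logb 2 x⁻¹ * Real.log 2 = Real.log x⁻¹ :=
      div_mul_cancel₀ _ (by positivity : Real.log 2 ≠ 0)
    have h3 : Real.log x⁻¹ ≤ x⁻¹ - 1 := Real.log_le_sub_one_of_pos (by positivity)
    have h4 : (0.6931471803 : ℝ) < Real.log 2 := Real.log_two_gt_d9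
    nlinarith [Real.logb_nonneg (show (1:ℝ) < 2 by norm_num) hxinv]
  have hu1 : ((u:ℝ)+1) ≤ 2 * C₁ * x ^ (-r) := by nlinarith
  have hmu : (m:ℝ) * ((u:ℝ)+1) ≤ 6 * C₁ * (x⁻¹ * x ^ (-r)) := by
    have := mul_le_mul hm3 hu1 (by positivity) (by positivity)
    nlinarith
  have hxx : x⁻¹ * x ^ (-r) = x ^ (-(r+1)) := by
    rw [← Real.rpow_neg_one x, ← Real.rpow_add hx0]
    ring_nf
  rw [hxx] at hmu
  have hthis : ((N:ℝ)+1) * Real.log C₀ ≤ (6 * C₁ * x ^ (-(r+1))) * Real.log Δ := by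
    nlinarith
  have h6 : ((N:ℝ)+1) ≤ 6 * C₁ * x ^ (-(r+1)) * Real.log Δ / Real.log C₀ := by
    rw [← le_div_iff₀ hlC₀] at hthis
    exact hthis
  have h7 : 6 * C₁ * x ^ (-(r+1)) * Real.log Δ / Real.log C₀ = B * x ^ (-(r+1)) := by
    rw [hBdef]; ring
  have h8 : (0:ℝ) < C₀^2 := by positivity
  push_cast
  nlinarith [h6, h7, hxrpos]
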